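/- Let x₁, …, x_N be elements of a commutative ring and let l ∈ {1, …, N}. Let A be the N×N matrix whose (i,j) entry is xᵢʲ for j ≠ l and is xᵢ^{N+1} for j = l (i.e. the matrix (xᵢʲ)_{i,j=1..N} with its l-th column replaced by (xᵢ^{N+1})ᵢ). Then det A = (−1)^{N−l}·e_{N−l+1}(x₁, …, x_N)·(∏_{i=1}^N xᵢ)·∏_{1 ≤ i < j ≤ N} (xⱼ − xᵢ). (This is the identity D_l = (−1)^{N−l} D_l^{N+1} with D_l^{N+1} = σ_N σ_{N−l+1} D used in the proof of Proposition 4.) -/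
import Mathlib

open Finset

private lemma Ioi_castSucc_eq {n : ℕ} (i : Fin n) :
    Ioi (i.castSucc) = insert (Fin.last n) ((Ioi i).map Fin.castSuccEmb) := by
  ext j
  simp only [mem_Ioi, mem_insert, mem_map, Fin.coe_castSuccEmb]
  constructor
  · intro hj
    rcases Fin.eq_castSucc_or_eq_last j with ⟨a, rfl⟩ | rfl
    · exact Or.inr ⟨a, Fin.castSucc_lt_castSucc_iff.mp hj, rfl⟩
    · exact Or.inl rfl
  · rintro (rfl | ⟨a, ha, rfl⟩)
    · exact Fin.castSucc_lt_last i
    · exact Fin.castSucc_lt_castSucc_iff.mpr ha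

private lemma prod_Ioi_castSucc' {M : Type*} [CommMonoid M] {n : ℕ} (i : Fin n)
    (f : Fin (n + 1) → M) :
    ∏ j ∈ Ioi i.castSucc, f j = (∏ j ∈ Ioi i, f j.castSucc) * f (Fin.last n) := by
  have hnm : Fin.last n ∉ (Ioi i).map Fin.castSuccEmb := by
    simp only [mem_map, Fin.coe_castSuccEmb, not_exists]
    rintro a ⟨-, ha⟩
    exact (Fin.castSucc_lt_last a).ne ha
  rw [Ioi_castSucc_eq, Finset.prod_insert hnm, Finset.prod_map, mul_comm]
  rfl

private lemma det_vandermonde_snoc {R : Type*} [CommRing R] {n : ℕ} (v : Fin n → R) (a : R) :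
    (Matrix.vandermonde (Fin.snoc v a)).det =
      (Matrix.vandermonde v).det * ∏ i, (a - v i) := by
  rw [Matrix.det_vandermonde, Matrix.det_vandermonde, Fin.prod_univ_castSucc]
  rw [show Ioi (Fin.last n) = (∅ : Finset (Fin (n + 1))) from by
      ext j; simp [(Fin.le_last j).not_gt],
    Finset.prod_empty, mul_one, ← Finset.prod_mul_distrib]
  apply Finset.prod_congr rfl
  intro i _
  rw [prod_Ioi_castSucc']
  simp [Fin.snoc_castSucc, Fin.snoc_last]

theorem replaced_column_vandermonde_determinant {R : Type*} [CommRing R]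
    (N : ℕ) (x : Fin N → R) (l : Fin N) :
    (Matrix.of fun i j : Fin N =>
        if j = l then x i ^ (N + 1) else x i ^ ((j : ℕ) + 1)).det =
      (-1 : R) ^ (N - 1 - (l : ℕ)) *
        (∑ t ∈ univ.powersetCard (N - (l : ℕ)), ∏ i ∈ t, x i) *
        ((∏ i, x i) * ∏ i, ∏ j ∈ Ioi i, (x j - x i)) := by
  obtain ⟨n, rfl⟩ : ∃ n, N = n + 1 := ⟨N - 1, by have := l.pos; omega⟩
  set V : R := ∏ i, ∏ j ∈ Ioi i, (x j - x i) with hV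
  set e : R := ∑ t ∈ univ.powersetCard (n + 1 - (l : ℕ)), ∏ i ∈ t, x i with he
  classical
  set y : Fin (n + 2) → Polynomial R := Fin.snoc (fun i => Polynomial.C (x i)) Polynomial.X
    with hy
  -- Step 1: determinant of the extended Vandermonde matrix
  have h1 : (Matrix.vandermonde y).det =
      Polynomial.C V * ∏ i : Fin (n + 1), (Polynomial.X - Polynomial.C (x i)) := by
    rw [hy, det_vandermonde_snoc]
    congr 1
    rw [show (Matrix.vandermonde fun i => Polynomial.C (x i)) =
        (Polynomial.C : R →+* Polynomial R).mapMatrix (Matrix.vandermonde x) by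
      ext i j; simp [Matrix.vandermonde]]
    rw [← RingHom.map_det, Matrix.det_vandermonde]
  -- the minor matrix
  set D : Matrix (Fin (n + 1)) (Fin (n + 1)) R :=
    Matrix.of (fun i k : Fin (n + 1) => x i ^ (((l.castSucc).succAbove k : Fin (n + 2)) : ℕ))
    with hD
  -- Step 2: Laplace expansion along the last row
  have h2 : (Matrix.vandermonde y).det =
      ∑ j : Fin (n + 2), (-1 : Polynomial R) ^ ((n + 1) + (j : ℕ)) * Polynomial.X ^ (j : ℕ) *
        Polynomial.C (Matrix.det (Matrix.of fun i k : Fin (n + 1) =>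
          x i ^ ((j.succAbove k : Fin (n + 2)) : ℕ))) := by
    rw [Matrix.det_succ_row _ (Fin.last (n + 1))]
    refine Finset.sum_congr rfl fun j _ => ?_
    have hlv : ((Fin.last (n + 1) : Fin (n + 2)) : ℕ) = n + 1 := rfl
    rw [hlv]
    have hA : Matrix.vandermonde y (Fin.last (n + 1)) j = Polynomial.X ^ (j : ℕ) := by
      simp [Matrix.vandermonde, hy, Fin.snoc_last]
    rw [hA]
    congr 1
    have hsub : (Matrix.vandermonde y).submatrix (Fin.last (n + 1)).succAbove j.succAbove =
        (Polynomial.C : R →+* Polynomial R).mapMatrix (Matrix.of fun i k : Fin (n + 1) =>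
          x i ^ ((j.succAbove k : Fin (n + 2)) : ℕ)) := by
      ext i k
      simp only [Matrix.submatrix_apply, Matrix.vandermonde, Fin.succAbove_last,
        RingHom.mapMatrix_apply, Matrix.map_apply, Matrix.of_apply]
      rw [hy, Fin.snoc_castSucc, ← map_pow]
    rw [hsub, ← RingHom.map_det]
  -- Step 3: compare coefficients at degree l
  have hcard : Multiset.card (Multiset.map x univ.val) = n + 1 := by simp
  have hcoeff1 : ((Matrix.vandermonde y).det).coeff (l : ℕ) =
      V * ((-1 : R) ^ (n + 1 - (l : ℕ)) * e) := by
    rw [h1, Polynomial.coeff_C_mul]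
    have hprod : (∏ i : Fin (n + 1), (Polynomial.X - Polynomial.C (x i))) =
        (Multiset.map (fun t => Polynomial.X - Polynomial.C t) (Multiset.map x univ.val)).prod := by
      rw [Multiset.map_map]
      rfl
    rw [hprod, Multiset.prod_X_sub_C_coeff _ (by rw [hcard]; omega), hcard]
    rw [Finset.esymm_map_val]
  have hcoeff2 : ((Matrix.vandermonde y).det).coeff (l : ℕ) =
      (-1 : R) ^ ((n + 1) + (l : ℕ)) * D.det := by
    rw [h2, Polynomial.finset_sum_coeff]
    rw [Finset.sum_eq_single (l.castSucc)]
    · have hcl : ((l.castSucc : Fin (n + 2)) : ℕ) = (l : ℕ) := rfl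
      rw [hcl]
      rw [show ((-1 : Polynomial R) ^ ((n + 1) + (l : ℕ))) =
          Polynomial.C ((-1 : R) ^ ((n + 1) + (l : ℕ))) from by
        rw [map_pow, map_neg, map_one]]
      rw [mul_right_comm, ← map_mul, Polynomial.coeff_C_mul, Polynomial.coeff_X_pow,
        if_pos rfl, mul_one, ← hD]
    · intro j _ hj
      have hne : (l : ℕ) ≠ (j : ℕ) := by
        intro h
        exact hj (Fin.ext h.symm)
      rw [show ((-1 : Polynomial R) ^ ((n + 1) + (j : ℕ))) =
          Polynomial.C ((-1 : R) ^ ((n + 1) + (j : ℕ))) from by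
        rw [map_pow, map_neg, map_one]]
      rw [mul_right_comm, ← map_mul, Polynomial.coeff_C_mul, Polynomial.coeff_X_pow,
        if_neg hne, mul_zero]
    · intro h
      exact absurd (Finset.mem_univ _) h
  -- Step 4: the minor determinant
  have hDdet : D.det = e * V := by
    have hln' : (l : ℕ) ≤ n := by have := l.is_lt; omega
    have key : (-1 : R) ^ ((n + 1) + (l : ℕ)) * (-1 : R) ^ (n + 1 - (l : ℕ)) = 1 := by
      rw [← pow_add]
      exact Even.neg_one_pow ⟨n + 1, by omega⟩
    have key2 : (-1 : R) ^ ((n + 1) + (l : ℕ)) * (-1 : R) ^ ((n + 1) + (l : ℕ)) = 1 := by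
      rw [← pow_add]
      exact Even.neg_one_pow ⟨(n + 1) + (l : ℕ), by ring⟩
    have h3 : (-1 : R) ^ ((n + 1) + (l : ℕ)) * D.det =
        V * ((-1 : R) ^ (n + 1 - (l : ℕ)) * e) := by rw [← hcoeff2, hcoeff1]
    linear_combination ((-1 : R) ^ ((n + 1) + (l : ℕ))) * h3 - D.det * key2 + (V * e) * key
  -- Step 5: the column permutation
  set σ : Equiv.Perm (Fin (n + 1)) :=
    Fin.revPerm * Fin.cycleRange (Fin.rev l) * Fin.revPerm with hσdef
  have hσapp : ∀ k : Fin (n + 1), σ k = Fin.rev (Fin.cycleRange (Fin.rev l) (Fin.rev k)) := by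
    intro k; rfl
  have hln : (l : ℕ) ≤ n := by have := l.is_lt; omega
  have hσ : ∀ k : Fin (n + 1),
      (((l.castSucc).succAbove (σ k) : Fin (n + 2)) : ℕ) = if k = l then n + 1 else (k : ℕ) := by
    intro k
    have hrevk : ((Fin.rev k : Fin (n + 1)) : ℕ) = n - (k : ℕ) := by
      rw [Fin.val_rev]; omega
    have hrevl : ((Fin.rev l : Fin (n + 1)) : ℕ) = n - (l : ℕ) := by
      rw [Fin.val_rev]; omega
    rcases lt_trichotomy (k : ℕ) (l : ℕ) with hkl | hkl | hkl
    · -- k < l : σ k = k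
      have hgt : Fin.rev l < Fin.rev k := by
        rw [Fin.lt_def, hrevk, hrevl]; omega
      have hσk : σ k = k := by rw [hσapp, Fin.cycleRange_of_gt hgt, Fin.rev_rev]
      rw [hσk, if_neg (by intro h; rw [h] at hkl; omega)]
      rw [Fin.succAbove_of_castSucc_lt _ _ (by rw [Fin.lt_def]; simpa using hkl)]
      simp
    · -- k = l : σ k = last
      have hk : k = l := Fin.ext hkl
      have hrr : Fin.rev k = Fin.rev l := by rw [hk]
      have hσk : σ k = Fin.rev 0 := by rw [hσapp, hrr, Fin.cycleRange_self]
      have hval : ((σ k : Fin (n + 1)) : ℕ) = n := by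
        rw [hσk, Fin.val_rev]
        simp
      rw [if_pos hk]
      rw [Fin.succAbove_of_le_castSucc _ _ (by
        rw [Fin.le_def]
        simp only [Fin.coe_castSucc, hval]
        omega)]
      simp [hval]
    · -- k > l : σ k = k - 1
      have hlt : Fin.rev k < Fin.rev l := by
        rw [Fin.lt_def, hrevk, hrevl]; have := k.is_lt; omega
      have hklast : Fin.rev k < Fin.last n := by
        rw [Fin.lt_def, hrevk, Fin.val_last]; have := k.is_lt; omega
      have hv1 : ((Fin.rev k + 1 : Fin (n + 1)) : ℕ) = n - (k : ℕ) + 1 := by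
        rw [Fin.val_add_one_of_lt hklast, hrevk]
      have hvalσ : ((σ k : Fin (n + 1)) : ℕ) = (k : ℕ) - 1 := by
        rw [hσapp, Fin.cycleRange_of_lt hlt, Fin.val_rev, hv1]
        have := k.is_lt; omega
      rw [if_neg (by intro h; rw [h] at hkl; omega)]
      rw [Fin.succAbove_of_le_castSucc _ _ (by
        rw [Fin.le_def]
        simp only [Fin.coe_castSucc, hvalσ]
        omega)]
      simp only [Fin.val_succ, hvalσ]
      omega
  -- Step 6: relate the original matrix to the permuted minor
  have hB : (Matrix.of fun i j : Fin (n + 1) =>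
      if j = l then x i ^ ((n + 1) + 1) else x i ^ ((j : ℕ) + 1)) =
      Matrix.of (fun i j : Fin (n + 1) => x i * (D.submatrix id σ) i j) := by
    ext i j
    simp only [Matrix.of_apply, Matrix.submatrix_apply, id, hD, Matrix.of_apply]
    rw [← pow_succ', hσ j]
    by_cases h : j = l
    · rw [if_pos h, if_pos h]
    · rw [if_neg h, if_neg h]
  have hsign : ((Equiv.Perm.sign σ : ℤ) : R) = (-1 : R) ^ (n - (l : ℕ)) := by
    have h5 : Equiv.Perm.sign σ = Equiv.Perm.sign (Fin.cycleRange (Fin.rev l)) := by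
      rw [hσdef, map_mul, map_mul]
      rw [mul_comm (Equiv.Perm.sign (Fin.revPerm : Equiv.Perm (Fin (n + 1))))
        (Equiv.Perm.sign (Fin.cycleRange (Fin.rev l))), mul_assoc, Int.units_mul_self, mul_one]
    rw [h5, Fin.sign_cycleRange]
    have hrl : ((Fin.rev l : Fin (n + 1)) : ℕ) = n - (l : ℕ) := by rw [Fin.val_rev]; omega
    rw [hrl]
    push_cast
    norm_num
  -- Step 7: assemble
  rw [hB, Matrix.det_mul_column, Matrix.det_permute' σ D, hDdet, hsign]
  have hNl : (n + 1) - 1 - (l : ℕ) = n - (l : ℕ) := by omega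
  rw [hNl]
  ring
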